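/- Let Φ be a 3-CNF formula with clauses C_1,…,C_n and variables A_1,…,A_m, and let P^Φ be the associated program. If E is an elementary set for P^Φ containing both c_0 and c_{n+1}, then for each i ∈ [1, m], at least one of a_i and na_i belongs to E. -/

import Mathlib

structure Rule (α : Type) where
  B : Finset α
  F : Finset α
  H : Finset α

variable {α : Type}

/-- Z is outbound in Y for program P. -/
def Outbound [DecidableEq α] (P : Set (Rule α)) (Y Z : Finset α) : Prop :=
  ∃ r ∈ P, (r.H ∩ Z).Nonempty ∧ (r.B ∩ (Y \ Z)).Nonempty ∧
    r.B ∩ Z = ∅ ∧ r.H ∩ (Y \ Z) = ∅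

/-- Y is an elementary set for P. -/
def Elementary [DecidableEq α] (P : Set (Rule α)) (Y : Finset α) : Prop :=
  Y.Nonempty ∧ ∀ Z : Finset α, Z ⊂ Y → Z.Nonempty → Outbound P Y Z

/-- X is a disjunctive set for P. -/
def DisjSet [DecidableEq α] (P : Set (Rule α)) (X : Finset α) : Prop :=
  ∃ r ∈ P, 1 < (r.H ∩ X).card

/-- The projection P_X of P on a set X of atoms. -/
def proj [DecidableEq α] (P : Set (Rule α)) (X : Finset α) : Set (Rule α) :=
  {r' | ∃ r ∈ P, (r.B ∩ X).Nonempty ∧ (r.H ∩ X).Nonempty ∧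
        r' = ⟨r.B ∩ X, ∅, r.H ∩ X⟩}

/-- P is head-elementary-set-free. -/
def HEF [DecidableEq α] (P : Set (Rule α)) : Prop :=
  ∀ r ∈ P, ∀ E : Finset α, Elementary P E → (E ∩ r.H).card ≤ 1

/-- Atoms of the program `P^Φ`. -/
inductive Atom : Type
  | phi : Atom
  | a : ℕ → Atom
  | na : ℕ → Atom
  | c : ℕ → Atom
deriving DecidableEq

/-- The atom opposite to a literal (variable index, sign). -/
def oppAtom : ℕ × Bool → Atom
  | (v, true) => Atom.na v
  | (v, false) => Atom.a v

/-- The atom corresponding to a literal. -/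
def litAtom : ℕ × Bool → Atom
  | (v, true) => Atom.a v
  | (v, false) => Atom.na v

/-- NV(c_i): opposites of the atoms of the literals of clause C_i. -/
def NV (C : ℕ → Fin 3 → ℕ × Bool) (i : ℕ) : Finset Atom :=
  {oppAtom (C i 0), oppAtom (C i 1), oppAtom (C i 2)}

/-- The program `P^Φ` associated with a 3-CNF with m variables `A_1,…,A_m`
and n clauses `C_1,…,C_n`, the clauses given by `C`. -/
def PPhi (m n : ℕ) (C : ℕ → Fin 3 → ℕ × Bool) : Set (Rule Atom) :=
  ({⟨{Atom.phi}, ∅, {Atom.c 0, Atom.c (n+1)}⟩,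
    ⟨{Atom.c 0}, ∅, {Atom.c 1}⟩,
    ⟨{Atom.c (n+1), Atom.na 1}, ∅, {Atom.a 1}⟩,
    ⟨{Atom.c (n+1), Atom.a 1}, ∅, {Atom.na 1}⟩,
    ⟨{Atom.a m, Atom.na m}, ∅, {Atom.c 0}⟩} : Set (Rule Atom)) ∪
  {r | ∃ i ∈ Finset.Icc 1 n, ∃ α ∈ NV C i,
        r = ⟨{Atom.c i, α}, ∅, {Atom.c (i+1)}⟩} ∪
  {r | ∃ i ∈ Finset.Icc 1 (m-1),
        r = ⟨{Atom.a i, Atom.na (i+1)}, ∅, {Atom.a (i+1)}⟩ ∨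
        r = ⟨{Atom.a i, Atom.a (i+1)}, ∅, {Atom.na (i+1)}⟩ ∨
        r = ⟨{Atom.na i, Atom.na (i+1)}, ∅, {Atom.a (i+1)}⟩ ∨
        r = ⟨{Atom.na i, Atom.a (i+1)}, ∅, {Atom.na (i+1)}⟩}

/-- All variable indices mentioned by clauses 1..n lie in [1,m]. -/
def ValidCNF (m n : ℕ) (C : ℕ → Fin 3 → ℕ × Bool) : Prop :=
  ∀ i ∈ Finset.Icc 1 n, ∀ j : Fin 3, (C i j).1 ∈ Finset.Icc 1 m

/-- Truth assignment X satisfies the 3-CNF. -/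
def Sat (n : ℕ) (C : ℕ → Fin 3 → ℕ × Bool) (X : ℕ → Bool) : Prop :=
  ∀ i ∈ Finset.Icc 1 n, ∃ j : Fin 3, X (C i j).1 = (C i j).2


/-- Atoms `a j`/`na j` with `i < j`. -/
def lvlGt (i : ℕ) : Atom → Bool
  | Atom.a j => decide (i < j)
  | Atom.na j => decide (i < j)
  | _ => false

theorem stmt10 (m n : ℕ) (hm : 1 ≤ m) (hn : 1 ≤ n)
    (C : ℕ → Fin 3 → ℕ × Bool) (hC : ValidCNF m n C)
    (E : Finset Atom) (hE : Elementary (PPhi m n C) E)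
    (h0 : Atom.c 0 ∈ E) (h1 : Atom.c (n+1) ∈ E) :
    ∀ i ∈ Finset.Icc 1 m, Atom.a i ∈ E ∨ Atom.na i ∈ E := by
  intro i hI
  rw [Finset.mem_Icc] at hI
  by_contra hcon
  push_neg at hcon
  obtain ⟨ha, hna⟩ := hcon
  -- Step 1: E contains no a/na atoms of level > i
  have hZ1 : ∀ j, i < j → (Atom.a j ∈ E ∨ Atom.na j ∈ E) → False := by
    intro j hj hjmem
    set Z1 : Finset Atom := E.filter (fun x => lvlGt i x = true) with hZ1def
    have hc0 : Atom.c 0 ∉ Z1 := by rw [hZ1def, Finset.mem_filter]; simp [lvlGt]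
    have hss : Z1 ⊂ E := by
      rw [Finset.ssubset_def]
      exact ⟨Finset.filter_subset _ _, fun h => hc0 (h h0)⟩
    have hne : Z1.Nonempty := by
      rcases hjmem with h | h
      · exact ⟨Atom.a j, Finset.mem_filter.mpr ⟨h, by simp [lvlGt, hj]⟩⟩
      · exact ⟨Atom.na j, Finset.mem_filter.mpr ⟨h, by simp [lvlGt, hj]⟩⟩
    obtain ⟨r, hr, hH, hB, hBZ, hHE⟩ := hE.2 Z1 hss hne
    simp only [PPhi, Set.mem_union, Set.mem_insert_iff, Set.mem_singleton_iff,
      Set.mem_setOf_eq] at hr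
    rcases hr with ((rfl | rfl | rfl | rfl | rfl) | ⟨k, hk, α, hα, rfl⟩) |
      ⟨k, hk, (rfl | rfl | rfl | rfl)⟩
    · obtain ⟨x, hx⟩ := hH
      rw [Finset.mem_inter] at hx
      obtain ⟨hx1, hx2⟩ := hx
      rw [hZ1def, Finset.mem_filter] at hx2
      rcases Finset.mem_insert.mp hx1 with rfl | hx1 <;>
        simp_all [lvlGt]
    · obtain ⟨x, hx⟩ := hH
      rw [Finset.mem_inter, Finset.mem_singleton] at hx
      obtain ⟨rfl, hx2⟩ := hx
      rw [hZ1def, Finset.mem_filter] at hx2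
      simp [lvlGt] at hx2
    · obtain ⟨x, hx⟩ := hH
      rw [Finset.mem_inter, Finset.mem_singleton] at hx
      obtain ⟨rfl, hx2⟩ := hx
      rw [hZ1def, Finset.mem_filter] at hx2
      simp [lvlGt] at hx2
      omega
    · obtain ⟨x, hx⟩ := hH
      rw [Finset.mem_inter, Finset.mem_singleton] at hx
      obtain ⟨rfl, hx2⟩ := hx
      rw [hZ1def, Finset.mem_filter] at hx2
      simp [lvlGt] at hx2
      omega
    · obtain ⟨x, hx⟩ := hH
      rw [Finset.mem_inter, Finset.mem_singleton] at hx
      obtain ⟨rfl, hx2⟩ := hx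
      rw [hZ1def, Finset.mem_filter] at hx2
      simp [lvlGt] at hx2
    · obtain ⟨x, hx⟩ := hH
      rw [Finset.mem_inter, Finset.mem_singleton] at hx
      obtain ⟨rfl, hx2⟩ := hx
      rw [hZ1def, Finset.mem_filter] at hx2
      simp [lvlGt] at hx2
    -- chain rules
    · obtain ⟨x, hx⟩ := hH
      rw [Finset.mem_inter, Finset.mem_singleton] at hx
      obtain ⟨rfl, hx2⟩ := hx
      rw [hZ1def, Finset.mem_filter] at hx2
      simp only [lvlGt, decide_eq_true_eq] at hx2
      obtain ⟨x, hy⟩ := hB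
      rw [Finset.mem_inter, Finset.mem_sdiff] at hy
      obtain ⟨hy1, hy2, hy3⟩ := hy
      rw [hZ1def, Finset.mem_filter] at hy3
      rcases Finset.mem_insert.mp hy1 with rfl | hy1
      · simp only [lvlGt, decide_eq_true_eq] at hy3
        have hik : ¬ i < k := fun h => hy3 ⟨hy2, h⟩
        have : k = i := by omega
        subst this; exact ha hy2
      · rw [Finset.mem_singleton] at hy1; subst hy1
        simp only [lvlGt, decide_eq_true_eq] at hy3
        exact hy3 ⟨hy2, hx2.2⟩
    · obtain ⟨x, hx⟩ := hH
      rw [Finset.mem_inter, Finset.mem_singleton] at hx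
      obtain ⟨rfl, hx2⟩ := hx
      rw [hZ1def, Finset.mem_filter] at hx2
      simp only [lvlGt, decide_eq_true_eq] at hx2
      obtain ⟨x, hy⟩ := hB
      rw [Finset.mem_inter, Finset.mem_sdiff] at hy
      obtain ⟨hy1, hy2, hy3⟩ := hy
      rw [hZ1def, Finset.mem_filter] at hy3
      rcases Finset.mem_insert.mp hy1 with rfl | hy1
      · simp only [lvlGt, decide_eq_true_eq] at hy3
        have hik : ¬ i < k := fun h => hy3 ⟨hy2, h⟩
        have : k = i := by omega
        subst this; exact ha hy2
      · rw [Finset.mem_singleton] at hy1; subst hy1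
        simp only [lvlGt, decide_eq_true_eq] at hy3
        exact hy3 ⟨hy2, hx2.2⟩
    · obtain ⟨x, hx⟩ := hH
      rw [Finset.mem_inter, Finset.mem_singleton] at hx
      obtain ⟨rfl, hx2⟩ := hx
      rw [hZ1def, Finset.mem_filter] at hx2
      simp only [lvlGt, decide_eq_true_eq] at hx2
      obtain ⟨x, hy⟩ := hB
      rw [Finset.mem_inter, Finset.mem_sdiff] at hy
      obtain ⟨hy1, hy2, hy3⟩ := hy
      rw [hZ1def, Finset.mem_filter] at hy3
      rcases Finset.mem_insert.mp hy1 with rfl | hy1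
      · simp only [lvlGt, decide_eq_true_eq] at hy3
        have hik : ¬ i < k := fun h => hy3 ⟨hy2, h⟩
        have : k = i := by omega
        subst this; exact hna hy2
      · rw [Finset.mem_singleton] at hy1; subst hy1
        simp only [lvlGt, decide_eq_true_eq] at hy3
        exact hy3 ⟨hy2, hx2.2⟩
    · obtain ⟨x, hx⟩ := hH
      rw [Finset.mem_inter, Finset.mem_singleton] at hx
      obtain ⟨rfl, hx2⟩ := hx
      rw [hZ1def, Finset.mem_filter] at hx2
      simp only [lvlGt, decide_eq_true_eq] at hx2
      obtain ⟨x, hy⟩ := hB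
      rw [Finset.mem_inter, Finset.mem_sdiff] at hy
      obtain ⟨hy1, hy2, hy3⟩ := hy
      rw [hZ1def, Finset.mem_filter] at hy3
      rcases Finset.mem_insert.mp hy1 with rfl | hy1
      · simp only [lvlGt, decide_eq_true_eq] at hy3
        have hik : ¬ i < k := fun h => hy3 ⟨hy2, h⟩
        have : k = i := by omega
        subst this; exact hna hy2
      · rw [Finset.mem_singleton] at hy1; subst hy1
        simp only [lvlGt, decide_eq_true_eq] at hy3
        exact hy3 ⟨hy2, hx2.2⟩
  -- Step 2: a_m, na_m ∉ E
  have ham : Atom.a m ∉ E := by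
    intro h
    rcases eq_or_lt_of_le hI.2 with heq | hlt
    · exact ha (heq ▸ h)
    · exact hZ1 m hlt (Or.inl h)
  have hnam : Atom.na m ∉ E := by
    intro h
    rcases eq_or_lt_of_le hI.2 with heq | hlt
    · exact hna (heq ▸ h)
    · exact hZ1 m hlt (Or.inr h)
  -- Step 3: {c 0} is a nonempty proper subset of E that is not outbound
  have hss : ({Atom.c 0} : Finset Atom) ⊂ E := by
    rw [Finset.ssubset_def]
    constructor
    · simp [Finset.singleton_subset_iff, h0]
    · intro h
      have := h h1
      simp at this
  obtain ⟨r, hr, hH, hB, hBZ, hHE⟩ := hE.2 _ hss ⟨_, Finset.mem_singleton_self (Atom.c 0)⟩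
  simp only [PPhi, Set.mem_union, Set.mem_insert_iff, Set.mem_singleton_iff,
    Set.mem_setOf_eq] at hr
  rcases hr with ((rfl | rfl | rfl | rfl | rfl) | ⟨k, hk, α, hα, rfl⟩) |
    ⟨k, hk, (rfl | rfl | rfl | rfl)⟩
  · have hmem : Atom.c (n+1) ∈ ({Atom.c 0, Atom.c (n+1)} : Finset Atom) ∩
        (E \ {Atom.c 0}) := by
      simp [Finset.mem_inter, Finset.mem_sdiff, h1]
    rw [hHE] at hmem
    exact Finset.notMem_empty _ hmem
  · obtain ⟨x, hx⟩ := hH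
    simp only [Finset.mem_inter, Finset.mem_singleton] at hx
    obtain ⟨rfl, hx2⟩ := hx
    simp at hx2
  · obtain ⟨x, hx⟩ := hH
    simp only [Finset.mem_inter, Finset.mem_singleton] at hx
    obtain ⟨rfl, hx2⟩ := hx
    simp at hx2
  · obtain ⟨x, hx⟩ := hH
    simp only [Finset.mem_inter, Finset.mem_singleton] at hx
    obtain ⟨rfl, hx2⟩ := hx
    simp at hx2
  · obtain ⟨x, hx⟩ := hB
    rw [Finset.mem_inter, Finset.mem_sdiff] at hx
    obtain ⟨hx1, hx2, _⟩ := hx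
    rcases Finset.mem_insert.mp hx1 with rfl | hx1
    · exact ham hx2
    · rw [Finset.mem_singleton] at hx1; subst hx1; exact hnam hx2
  · obtain ⟨x, hx⟩ := hH
    simp only [Finset.mem_inter, Finset.mem_singleton] at hx
    obtain ⟨rfl, hx2⟩ := hx
    simp at hx2
  · obtain ⟨x, hx⟩ := hH
    simp only [Finset.mem_inter, Finset.mem_singleton] at hx
    obtain ⟨rfl, hx2⟩ := hx
    simp at hx2
  · obtain ⟨x, hx⟩ := hH
    simp only [Finset.mem_inter, Finset.mem_singleton] at hx
    obtain ⟨rfl, hx2⟩ := hx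
    simp at hx2
  · obtain ⟨x, hx⟩ := hH
    simp only [Finset.mem_inter, Finset.mem_singleton] at hx
    obtain ⟨rfl, hx2⟩ := hx
    simp at hx2
  · obtain ⟨x, hx⟩ := hH
    simp only [Finset.mem_inter, Finset.mem_singleton] at hx
    obtain ⟨rfl, hx2⟩ := hx
    simp at hx2
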